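/- Let F/F_0 be a quadratic extension of non-Archimedean local fields with involution σ, V = V_1 ⊥ V_2 a 3-dimensional hermitian space with dim V_1 = 1, dim V_2 = 2, and β = β_1 + β_2 where β_1 ∈ F acts on V_1 with σ(β_1) = -β_1, and β_2 generates a quadratic field extension F[β_2]/F acting on V_2 with σ_h(β_2) = -β_2. Let D be the fixed field of σ_h in F[β_2], let λ: F[β_2] → F be the F-linear σ_h-equivariant map with λ(1) = 1 and λ(β_2) = β_1, let h' be the unique F[β_2]-hermitian form on V_2 with h = λ∘h' on V_2, and let d_1 ∈ D^×, d_2 ∈ F_0^× be the determinants of (V_2, h') and (V_1, h). Then there exists a nonzero v ∈ V with h(v,v) = h(v, βv) = 0 if and only if -d_1 d_2^{-1} ∈ Nr_{F[β_2]/D}(F[β_2]^×). -/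
import Mathlib


/-- Criterion for non-emptiness of `X_β(F₀)` for type (B) strata.  `F/F₀` quadratic with
involution `σ` (char of residue field odd, so `2 ≠ 0`), `V = V₁ ⊥ V₂` with `V₁ = F` of
determinant `d₂ ∈ F₀ˣ` and `V₂ = E = F[β₂]` a quadratic extension with adjoint involution
`τ = σ_h` (fixed field `D`), carrying the rank-one `E`-hermitian form
`h'(x,y) = x·d₁·τ(y)` with `d₁ ∈ Dˣ`; `lam : E → F` is the `F`-linear `τ`-equivariant map
with `lam 1 = 1`, `lam β₂ = β₁`, and `h = lam ∘ h'` on `V₂`.  Then there is a nonzero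
`v = (x₁, x₂)` with `h(v,v) = 0 = h(v, βv)` iff `-d₁d₂⁻¹ ∈ Nr_{E/D}(Eˣ)`. -/
theorem stmt13 {F E : Type*} [Field F] [Field E] [Algebra F E]
    (hdeg : Module.finrank F E = 2)
    (σ : F →+* F) (hσ : ∀ t, σ (σ t) = t) (hσne : ∃ t, σ t ≠ t)
    (h2 : (2 : F) ≠ 0)
    (τ : E →+* E) (hτ : ∀ t, τ (τ t) = t) (hτne : ∃ t, τ t ≠ t)
    (hcompat : ∀ x : F, τ (algebraMap F E x) = algebraMap F E (σ x))
    (β₂ : E) (hβ₂skew : τ β₂ = -β₂) (hgen : Algebra.adjoin F {β₂} = ⊤)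
    (β₁ : F) (hβ₁skew : σ β₁ = -β₁)
    (lam : E →ₗ[F] F) (hlam1 : lam 1 = 1) (hlamβ : lam β₂ = β₁)
    (hequiv : ∀ z : E, lam (τ z) = σ (lam z))
    (d₁ : E) (hd₁ : d₁ ≠ 0) (hd₁fix : τ d₁ = d₁)
    (d₂ : F) (hd₂ : d₂ ≠ 0) (hd₂fix : σ d₂ = d₂) :
    (∃ (x₁ : F) (x₂ : E), ¬(x₁ = 0 ∧ x₂ = 0) ∧
        d₂ * (x₁ * σ x₁) + lam (x₂ * d₁ * τ x₂) = 0 ∧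
        β₁ * (d₂ * (x₁ * σ x₁)) + lam (β₂ * (x₂ * d₁ * τ x₂)) = 0) ↔
      ∃ y : E, y ≠ 0 ∧ -(d₁ * (algebraMap F E d₂)⁻¹) = y * τ y := by
  have hinj : Function.Injective (algebraMap F E) := (algebraMap F E).injective
  have hd₂E : algebraMap F E d₂ ≠ 0 := fun h => hd₂ (hinj (by rw [h, map_zero]))
  -- σ, τ are injective; nonzero is preserved
  have hσ0 : ∀ x : F, x ≠ 0 → σ x ≠ 0 := by
    intro x hx h
    exact hx (by rw [← hσ x, h, map_zero])
  have hτ0 : ∀ x : E, x ≠ 0 → τ x ≠ 0 := by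
    intro x hx h
    exact hx (by rw [← hτ x, h, map_zero])
  -- β₂ is not in the image of F
  have hnot : ∀ c : F, β₂ ≠ algebraMap F E c := by
    intro c hc
    have hb : Algebra.adjoin F {β₂} ≤ ⊥ := by
      rw [Algebra.adjoin_le_iff]
      intro x hx
      rw [Set.mem_singleton_iff] at hx
      subst hx
      show x ∈ (⊥ : Subalgebra F E)
      rw [Algebra.mem_bot]
      exact ⟨c, hc.symm⟩
    have hbt : (⊥ : Subalgebra F E) = ⊤ := le_antisymm le_top (hgen ▸ hb)
    have := Subalgebra.bot_eq_top_iff_finrank_eq_one.mp hbt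
    rw [hdeg] at this
    norm_num at this
  -- every element of E is uniquely `alg u + alg t * β₂`
  have hB : ∀ w : E, ∃ u t : F, w = algebraMap F E u + algebraMap F E t * β₂ := by
    have hli : LinearIndependent F ![(1:E), β₂] := by
      rw [LinearIndependent.pair_iff]
      intro s t hst
      rw [← Algebra.algebraMap_eq_smul_one, Algebra.smul_def] at hst
      by_cases ht : t = 0
      · subst ht
        rw [map_zero, zero_mul, add_zero] at hst
        exact ⟨hinj (by rw [hst, map_zero]), rfl⟩
      · exfalso
        apply hnot (-s/t)
        have htE : algebraMap F E t ≠ 0 := fun h => ht (hinj (by rw [h, map_zero]))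
        rw [map_div₀, map_neg, eq_div_iff htE]
        linear_combination hst
    let B := basisOfLinearIndependentOfCardEqFinrank hli (by simp [hdeg])
    have hBc : ⇑B = ![(1:E), β₂] := coe_basisOfLinearIndependentOfCardEqFinrank hli _
    intro w
    refine ⟨B.repr w 0, B.repr w 1, ?_⟩
    have hs := B.sum_repr w
    rw [Fin.sum_univ_two, hBc] at hs
    simp only [Matrix.cons_val_zero, Matrix.cons_val_one, Matrix.head_cons] at hs
    rw [← Algebra.algebraMap_eq_smul_one, Algebra.smul_def] at hs
    exact hs.symm
  -- minimal polynomial data: β₂² = alg q + alg p β₂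
  obtain ⟨q, p, hpq⟩ := hB (β₂ * β₂)
  -- β₁ is not a root of the minimal polynomial of β₂
  have hmin : β₁ * β₁ - p * β₁ - q ≠ 0 := by
    intro h0
    have h0' : algebraMap F E β₁ * algebraMap F E β₁ - algebraMap F E p * algebraMap F E β₁
        - algebraMap F E q = 0 := by
      rw [← map_mul, ← map_mul, ← map_sub, ← map_sub, h0, map_zero]
    have hprod : (algebraMap F E β₁ - β₂) *
        (algebraMap F E β₁ - (algebraMap F E p - β₂)) = 0 := by
      linear_combination h0' - hpq
    rcases mul_eq_zero.mp hprod with h | h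
    · exact hnot β₁ (by linear_combination -h)
    · refine hnot (p - β₁) ?_
      rw [map_sub]
      linear_combination h
  -- evaluating lam on elements written in the basis
  have hlamval : ∀ u t : F, lam (algebraMap F E u + algebraMap F E t * β₂) = u + t * β₁ := by
    intro u t
    rw [Algebra.algebraMap_eq_smul_one u, ← Algebra.smul_def, map_add, map_smul, map_smul,
      hlam1, hlamβ, smul_eq_mul, smul_eq_mul, mul_one]
  constructor
  · rintro ⟨x₁, x₂, hx, e1, e2⟩
    obtain ⟨u, t, hw⟩ := hB (x₂ * d₁ * τ x₂)
    -- rewrite the two equations in coordinates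
    have hβw : β₂ * (x₂ * d₁ * τ x₂)
        = algebraMap F E (t*q) + algebraMap F E (u + t*p) * β₂ := by
      rw [hw, map_mul, map_add, map_mul]
      linear_combination (algebraMap F E t) * hpq
    rw [hw, hlamval] at e1
    rw [hβw, hlamval] at e2
    -- deduce t = 0 and u = -a
    have ht0 : t = 0 := by
      have : t * (β₁ * β₁ - p * β₁ - q) = 0 := by linear_combination β₁ * e1 - e2
      rcases mul_eq_zero.mp this with h | h
      · exact h
      · exact absurd h hmin
    subst ht0
    rw [map_zero, zero_mul, add_zero] at hw
    have hu : u = -(d₂ * (x₁ * σ x₁)) := by linear_combination e1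
    -- x₂ ≠ 0
    have hx₂ : x₂ ≠ 0 := by
      intro h
      subst h
      rw [zero_mul, zero_mul, eq_comm] at hw
      have hu0 : u = 0 := hinj (by rw [hw, map_zero])
      rw [hu0, eq_comm, neg_eq_zero] at hu
      have hx₁ : x₁ ≠ 0 := fun h1 => hx ⟨h1, rfl⟩
      exact (mul_ne_zero hd₂ (mul_ne_zero hx₁ (hσ0 x₁ hx₁))) hu
    -- x₁ ≠ 0
    have hx₁ : x₁ ≠ 0 := by
      intro h
      subst h
      rw [zero_mul, mul_zero, neg_zero] at hu
      rw [hu, map_zero] at hw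
      exact (mul_ne_zero (mul_ne_zero hx₂ hd₁) (hτ0 x₂ hx₂)) hw
    refine ⟨algebraMap F E x₁ * x₂⁻¹, ?_, ?_⟩
    · exact mul_ne_zero (fun h => hx₁ (hinj (by rw [h, map_zero]))) (inv_ne_zero hx₂)
    · have hτx₂ : τ x₂ ≠ 0 := hτ0 x₂ hx₂
      rw [map_mul, map_inv₀, hcompat]
      have key : x₂ * d₁ * τ x₂
          = -(algebraMap F E d₂ * (algebraMap F E x₁ * algebraMap F E (σ x₁))) := by
        rw [hw, hu, map_neg, map_mul, map_mul]
      field_simp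
      linear_combination -key
  · rintro ⟨y, hy, heq⟩
    have hτy : τ y ≠ 0 := hτ0 y hy
    have heq' : d₁ = -(algebraMap F E d₂) * (y * τ y) := by
      rw [← heq]
      field_simp
    have hx2 : y⁻¹ * d₁ * τ y⁻¹ = -(algebraMap F E d₂) := by
      rw [map_inv₀, heq']
      field_simp
    refine ⟨1, y⁻¹, by simp, ?_, ?_⟩
    · rw [hx2]
      have hl : lam (-(algebraMap F E d₂)) = -d₂ := by
        rw [Algebra.algebraMap_eq_smul_one, ← neg_smul, map_smul, hlam1, smul_eq_mul, mul_one]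
      rw [hl, map_one]
      ring
    · rw [hx2]
      have hl : lam (β₂ * -(algebraMap F E d₂)) = -d₂ * β₁ := by
        have : β₂ * -(algebraMap F E d₂) = (-d₂) • β₂ := by
          rw [Algebra.smul_def, map_neg]
          ring
        rw [this, map_smul, hlamβ, smul_eq_mul]
      rw [hl, map_one]
      ring
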